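/- arXiv:1902.08343 — 3 statements merged into one kernel-verified Lean document; each statement's English description precedes it below -/
import Mathlib

section
/- Let A be an a×a positive definite Hermitian matrix and B an a×b matrix (a > b) with B^H B = I_b. Let μ_1 ≥ … ≥ μ_b be the eigenvalues of (B^H A B)⁻¹ and λ_1 ≥ … ≥ λ_b those of B^H A⁻¹ B. Then μ_k ≤ λ_k for all k = 1,…,b. -/
open Matrix ComplexOrder
open scoped MatrixOrder

local notation "⟪" x ", " y "⟫" => @inner ℂ _ _ x y

lemma quad_repr {n : ℕ} {M : Matrix (Fin n) (Fin n) ℂ} (hM : M.IsHermitian)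
    (x : EuclideanSpace ℂ (Fin n)) :
    star ((WithLp.equiv 2 _) x) ⬝ᵥ M *ᵥ ((WithLp.equiv 2 _) x)
      = ∑ i, (hM.eigenvalues i : ℂ) * ‖hM.eigenvectorBasis.repr x i‖ ^ 2 := by
  set v := hM.eigenvectorBasis with hv
  have h1 : star ((WithLp.equiv 2 _) x) ⬝ᵥ M *ᵥ ((WithLp.equiv 2 _) x)
      = ⟪x, Matrix.toEuclideanLin M x⟫ := by
    rw [EuclideanSpace.inner_eq_star_dotProduct]
    exact dotProduct_comm _ _
  have hTv : ∀ i, Matrix.toEuclideanLin M (v i) = (hM.eigenvalues i : ℂ) • v i := by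
    intro i
    have h2 := hM.mulVec_eigenvectorBasis i
    rw [toEuclideanLin_apply]
    rw [hv, h2]
    rw [RCLike.real_smul_eq_coe_smul (K := ℂ)]
    rfl
  have hrepr : ∀ i, ⟪x, v i⟫ = starRingEnd ℂ (v.repr x i) := by
    intro i
    rw [← inner_conj_symm, v.repr_apply_apply x i]
  have hx : ∑ i, v.repr x i • v i = x := v.sum_repr x
  rw [h1]
  conv_lhs => rw [← hx]
  rw [map_sum]
  simp_rw [_root_.map_smul, hTv]
  rw [inner_sum]
  simp_rw [inner_smul_right]
  simp_rw [hx, hrepr]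
  congr 1
  funext i
  have h3 : (‖v.repr x i‖ : ℂ) ^ 2 = v.repr x i * starRingEnd ℂ (v.repr x i) := by
    rw [Complex.mul_conj']
  rw [h3]; ring

lemma norm_sq_repr {n : ℕ} (v : OrthonormalBasis (Fin n) ℂ (EuclideanSpace ℂ (Fin n)))
    (x : EuclideanSpace ℂ (Fin n)) : ‖x‖ ^ 2 = ∑ i, ‖v.repr x i‖ ^ 2 := by
  rw [← v.repr.norm_map x, EuclideanSpace.norm_eq,
    Real.sq_sqrt (Finset.sum_nonneg fun i _ => sq_nonneg _)]

lemma repr_eq_zero_of_mem_span {n : ℕ} (v : OrthonormalBasis (Fin n) ℂ (EuclideanSpace ℂ (Fin n)))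
    (s : Finset (Fin n)) {x : EuclideanSpace ℂ (Fin n)}
    (hx : x ∈ Submodule.span ℂ (v '' ↑s)) {i : Fin n} (hi : i ∉ s) : v.repr x i = 0 := by
  rw [v.repr_apply_apply]
  have hker : Submodule.span ℂ (v '' ↑s) ≤ LinearMap.ker (innerSL ℂ (v i)).toLinearMap := by
    rw [Submodule.span_le]
    rintro y ⟨j, hj, rfl⟩
    simp only [SetLike.mem_coe, LinearMap.mem_ker, ContinuousLinearMap.coe_coe, innerSL_apply_apply]
    exact v.orthonormal.2 (fun h => hi (h ▸ hj))
  have := hker hx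
  simpa using this

lemma quad_le_of_mem_span {n : ℕ} {M : Matrix (Fin n) (Fin n) ℂ} (hM : M.IsHermitian)
    (s : Finset (Fin n)) (c : ℝ) (hc : ∀ i ∈ s, hM.eigenvalues i ≤ c)
    {x : EuclideanSpace ℂ (Fin n)}
    (hx : x ∈ Submodule.span ℂ (hM.eigenvectorBasis '' ↑s)) :
    (star ((WithLp.equiv 2 _) x) ⬝ᵥ M *ᵥ ((WithLp.equiv 2 _) x)).re ≤ c * ‖x‖ ^ 2 := by
  set v := hM.eigenvectorBasis with hv
  have hz : ∀ i ∉ s, v.repr x i = 0 := fun i hi => repr_eq_zero_of_mem_span v s hx hi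
  have hq := quad_repr hM x
  have : (star ((WithLp.equiv 2 _) x) ⬝ᵥ M *ᵥ ((WithLp.equiv 2 _) x)).re
      = ∑ i, hM.eigenvalues i * ‖v.repr x i‖ ^ 2 := by
    rw [hq]
    push_cast
    rw [Complex.re_sum]
    simp [← Complex.ofReal_pow]
    rfl
  rw [this, norm_sq_repr v x, Finset.mul_sum]
  rw [← Finset.sum_subset (Finset.subset_univ s)
      (fun i _ hi => by rw [hz i hi]; simp),
    ← Finset.sum_subset (Finset.subset_univ s)
      (fun i _ hi => by rw [hz i hi]; simp)]
  exact Finset.sum_le_sum fun i hi =>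
    mul_le_mul_of_nonneg_right (hc i hi) (sq_nonneg _)

lemma quad_ge_of_mem_span {n : ℕ} {M : Matrix (Fin n) (Fin n) ℂ} (hM : M.IsHermitian)
    (s : Finset (Fin n)) (c : ℝ) (hc : ∀ i ∈ s, c ≤ hM.eigenvalues i)
    {x : EuclideanSpace ℂ (Fin n)}
    (hx : x ∈ Submodule.span ℂ (hM.eigenvectorBasis '' ↑s)) :
    c * ‖x‖ ^ 2 ≤ (star ((WithLp.equiv 2 _) x) ⬝ᵥ M *ᵥ ((WithLp.equiv 2 _) x)).re := by
  set v := hM.eigenvectorBasis with hv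
  have hz : ∀ i ∉ s, v.repr x i = 0 := fun i hi => repr_eq_zero_of_mem_span v s hx hi
  have hq := quad_repr hM x
  have : (star ((WithLp.equiv 2 _) x) ⬝ᵥ M *ᵥ ((WithLp.equiv 2 _) x)).re
      = ∑ i, hM.eigenvalues i * ‖v.repr x i‖ ^ 2 := by
    rw [hq]
    push_cast
    rw [Complex.re_sum]
    simp [← Complex.ofReal_pow]
    rfl
  rw [this, norm_sq_repr v x, Finset.mul_sum]
  rw [← Finset.sum_subset (Finset.subset_univ s)
      (fun i _ hi => by rw [hz i hi]; simp),
    ← Finset.sum_subset (Finset.subset_univ s)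
      (fun i _ hi => by rw [hz i hi]; simp)]
  exact Finset.sum_le_sum fun i hi =>
    mul_le_mul_of_nonneg_right (hc i hi) (sq_nonneg _)

lemma finrank_span_onb {n : ℕ} (v : OrthonormalBasis (Fin n) ℂ (EuclideanSpace ℂ (Fin n)))
    (t : Finset (Fin n)) :
    Module.finrank ℂ (Submodule.span ℂ (v '' ↑t)) = t.card := by
  have h1 : LinearIndependent ℂ (fun i : t => v i) :=
    (v.orthonormal.comp Subtype.val Subtype.val_injective).linearIndependent
  have h2 : Set.range (fun i : t => v i) = v '' ↑t := by
    ext y; simp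
  rw [← h2, finrank_span_eq_card h1, Fintype.card_coe]

lemma weyl_mono {n : ℕ} {P Q : Matrix (Fin n) (Fin n) ℂ}
    (hP : P.IsHermitian) (hQ : Q.IsHermitian)
    (hle : ∀ y : Fin n → ℂ, (star y ⬝ᵥ P *ᵥ y).re ≤ (star y ⬝ᵥ Q *ᵥ y).re)
    (μ lam : Fin n → ℝ) (hμa : Antitone μ) (hla : Antitone lam)
    (σ τ : Equiv.Perm (Fin n)) (hμ : μ = hP.eigenvalues ∘ σ) (hl : lam = hQ.eigenvalues ∘ τ)
    (k : Fin n) : μ k ≤ lam k := by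
  classical
  set sP : Finset (Fin n) := Finset.image σ (Finset.Iic k) with hsP
  set sQ : Finset (Fin n) := Finset.image τ (Finset.Ici k) with hsQ
  set S := Submodule.span ℂ (hP.eigenvectorBasis '' ↑sP) with hS
  set T := Submodule.span ℂ (hQ.eigenvectorBasis '' ↑sQ) with hT
  have hcardP : sP.card = (k : ℕ) + 1 := by
    rw [hsP, Finset.card_image_of_injective _ σ.injective, Fin.card_Iic]
  have hcardQ : sQ.card = n - (k : ℕ) := by
    rw [hsQ, Finset.card_image_of_injective _ τ.injective, Fin.card_Ici]
  have hrS : Module.finrank ℂ S = (k : ℕ) + 1 := by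
    rw [hS, finrank_span_onb, hcardP]
  have hrT : Module.finrank ℂ T = n - (k : ℕ) := by
    rw [hT, finrank_span_onb, hcardQ]
  have hbot : S ⊓ T ≠ ⊥ := by
    intro hb
    have h1 := Submodule.finrank_sup_add_finrank_inf_eq S T
    rw [hb, finrank_bot, add_zero, hrS, hrT] at h1
    have h2 : Module.finrank ℂ ↥(S ⊔ T) ≤ n := by
      have := Submodule.finrank_le (S ⊔ T)
      rwa [finrank_euclideanSpace, Fintype.card_fin] at this
    have hk := k.isLt
    omega
  obtain ⟨x, hxmem, hxne⟩ := Submodule.exists_mem_ne_zero_of_ne_bot hbot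
  have hxS : x ∈ S := hxmem.1
  have hxT : x ∈ T := hxmem.2
  have hlow : μ k * ‖x‖ ^ 2 ≤ (star ((WithLp.equiv 2 _) x) ⬝ᵥ P *ᵥ ((WithLp.equiv 2 _) x)).re := by
    refine quad_ge_of_mem_span hP sP (μ k) ?_ hxS
    rintro i hi
    rw [hsP] at hi
    obtain ⟨j, hj, rfl⟩ := Finset.mem_image.mp hi
    have : μ j = hP.eigenvalues (σ j) := by rw [hμ]; rfl
    rw [← this]
    exact hμa (Finset.mem_Iic.mp hj)
  have hhigh : (star ((WithLp.equiv 2 _) x) ⬝ᵥ Q *ᵥ ((WithLp.equiv 2 _) x)).re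
      ≤ lam k * ‖x‖ ^ 2 := by
    refine quad_le_of_mem_span hQ sQ (lam k) ?_ hxT
    rintro i hi
    rw [hsQ] at hi
    obtain ⟨j, hj, rfl⟩ := Finset.mem_image.mp hi
    have : lam j = hQ.eigenvalues (τ j) := by rw [hl]; rfl
    rw [← this]
    exact hla (Finset.mem_Ici.mp hj)
  have hchain : μ k * ‖x‖ ^ 2 ≤ lam k * ‖x‖ ^ 2 :=
    le_trans hlow (le_trans (hle _) hhigh)
  have hnorm : (0 : ℝ) < ‖x‖ ^ 2 := pow_pos (norm_pos_iff.mpr hxne) 2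
  exact le_of_mul_le_mul_right (by simpa [mul_comm] using hchain) hnorm

lemma conj_quad {a b : ℕ} (B : Matrix (Fin a) (Fin b) ℂ) (N : Matrix (Fin a) (Fin a) ℂ)
    (z : Fin b → ℂ) :
    star z ⬝ᵥ (Bᴴ * N * B) *ᵥ z = star (B *ᵥ z) ⬝ᵥ N *ᵥ (B *ᵥ z) := by
  rw [← Matrix.mulVec_mulVec, ← Matrix.mulVec_mulVec, Matrix.dotProduct_mulVec,
    ← Matrix.star_mulVec]

theorem stmt4 {a b : ℕ} (hab : b < a) (A : Matrix (Fin a) (Fin a) ℂ) (hA : A.PosDef)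
    (B : Matrix (Fin a) (Fin b) ℂ) (hB : Bᴴ * B = 1)
    (h1 : ((Bᴴ * A * B)⁻¹).IsHermitian) (h2 : (Bᴴ * A⁻¹ * B).IsHermitian)
    (μ lam : Fin b → ℝ) (hμa : Antitone μ) (hla : Antitone lam)
    (hμ : ∃ σ : Equiv.Perm (Fin b), μ = h1.eigenvalues ∘ σ)
    (hl : ∃ σ : Equiv.Perm (Fin b), lam = h2.eigenvalues ∘ σ) :
    ∀ k, μ k ≤ lam k := by
  obtain ⟨σ, hμ⟩ := hμ
  obtain ⟨τ, hl⟩ := hl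
  set M := Bᴴ * A * B with hM
  -- B is injective on vectors
  have hBinj : ∀ z : Fin b → ℂ, B *ᵥ z = 0 → z = 0 := by
    intro z hz
    have h3 : (Bᴴ * B) *ᵥ z = 0 := by rw [← Matrix.mulVec_mulVec, hz, Matrix.mulVec_zero]
    rwa [hB, Matrix.one_mulVec] at h3
  have hMpd : M.PosDef := by
    refine Matrix.posDef_iff_dotProduct_mulVec.mpr ⟨Matrix.isHermitian_conjTranspose_mul_mul B hA.isHermitian, ?_⟩
    intro z hz
    rw [hM, conj_quad]
    exact hA.dotProduct_mulVec_pos (fun h => hz (hBinj z h))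
  have hdetM : IsUnit M.det := hMpd.det_pos.ne'.isUnit
  have hdetA : IsUnit A.det := hA.det_pos.ne'.isUnit
  -- the key Loewner-type inequality
  have hle : ∀ y : Fin b → ℂ,
      (star y ⬝ᵥ M⁻¹ *ᵥ y).re ≤ (star y ⬝ᵥ (Bᴴ * A⁻¹ * B) *ᵥ y).re := by
    intro y
    set z := M⁻¹ *ᵥ y with hz
    have hy : M *ᵥ z = y := by
      rw [hz, Matrix.mulVec_mulVec, Matrix.mul_nonsing_inv _ hdetM, Matrix.one_mulVec]
    have e1 : star y ⬝ᵥ M⁻¹ *ᵥ y = star z ⬝ᵥ M *ᵥ z := by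
      conv_lhs => rw [← hy]
      rw [Matrix.star_mulVec, Matrix.mulVec_mulVec, Matrix.nonsing_inv_mul _ hdetM,
        Matrix.one_mulVec, hMpd.isHermitian.eq, ← Matrix.dotProduct_mulVec]
    set Sq := CFC.sqrt A with hSq
    have hsq : Sq * Sq = A := CFC.sqrt_mul_sqrt_self A hA.posSemidef.nonneg
    have hsh : Sqᴴ = Sq := (CFC.sqrt_nonneg A).posSemidef.isHermitian.eq
    set u := Sq *ᵥ (B *ᵥ z) with hu
    set w := Sq *ᵥ (A⁻¹ *ᵥ (B *ᵥ y)) with hw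
    have hsqsq : ∀ p q : Fin a → ℂ, star (Sq *ᵥ p) ⬝ᵥ (Sq *ᵥ q) = star p ⬝ᵥ A *ᵥ q := by
      intro p q
      rw [Matrix.star_mulVec, ← Matrix.dotProduct_mulVec, Matrix.mulVec_mulVec, hsh, hsq]
    have hAAinv : ∀ p : Fin a → ℂ, A *ᵥ (A⁻¹ *ᵥ p) = p := by
      intro p
      rw [Matrix.mulVec_mulVec, Matrix.mul_nonsing_inv _ hdetA, Matrix.one_mulVec]
    have hau : star u ⬝ᵥ u = star z ⬝ᵥ M *ᵥ z := by
      rw [hu, hsqsq, hM, ← conj_quad]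
    have haw : star w ⬝ᵥ w = star y ⬝ᵥ (Bᴴ * A⁻¹ * B) *ᵥ y := by
      rw [hw, hsqsq, hAAinv, Matrix.star_mulVec, hA.isHermitian.inv.eq,
        ← Matrix.dotProduct_mulVec, ← conj_quad]
    have hc : star u ⬝ᵥ w = star z ⬝ᵥ M *ᵥ z := by
      rw [hu, hw, hsqsq, hAAinv, Matrix.star_mulVec, ← Matrix.dotProduct_mulVec,
        Matrix.mulVec_mulVec, hB, Matrix.one_mulVec, ← hy]
    -- pass to EuclideanSpace
    set u' : EuclideanSpace ℂ (Fin a) := (WithLp.equiv 2 _).symm u with hu'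
    set w' : EuclideanSpace ℂ (Fin a) := (WithLp.equiv 2 _).symm w with hw'
    have hiu : (inner ℂ u' u' : ℂ) = star u ⬝ᵥ u := by rw [dotProduct_comm]; rfl
    have hiw : (inner ℂ w' w' : ℂ) = star w ⬝ᵥ w := by rw [dotProduct_comm]; rfl
    have hiuw : (inner ℂ u' w' : ℂ) = star u ⬝ᵥ w := by rw [dotProduct_comm]; rfl
    have hnu : ((‖u'‖ ^ 2 : ℝ) : ℂ) = star z ⬝ᵥ M *ᵥ z := by
      rw [← hau, ← hiu, inner_self_eq_norm_sq_to_K]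
      norm_cast
    have hnw : ((‖w'‖ ^ 2 : ℝ) : ℂ) = star y ⬝ᵥ (Bᴴ * A⁻¹ * B) *ᵥ y := by
      rw [← haw, ← hiw, inner_self_eq_norm_sq_to_K]
      norm_cast
    have hcs : ‖u'‖ ^ 2 ≤ ‖u'‖ * ‖w'‖ := by
      have hn := norm_inner_le_norm (𝕜 := ℂ) u' w'
      rw [hiuw, hc, ← hnu] at hn
      calc ‖u'‖ ^ 2 = ‖((‖u'‖ ^ 2 : ℝ) : ℂ)‖ := by
            rw [Complex.norm_real, Real.norm_of_nonneg (sq_nonneg _)]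
        _ ≤ ‖u'‖ * ‖w'‖ := hn
    have hfin : ‖u'‖ ^ 2 ≤ ‖w'‖ ^ 2 := by
      rcases eq_or_lt_of_le (norm_nonneg u') with h0 | h0
      · rw [← h0]; simpa using sq_nonneg ‖w'‖
      · have h4 : ‖u'‖ ≤ ‖w'‖ := by
          have := hcs
          rw [pow_two] at this
          exact le_of_mul_le_mul_left this h0
        exact pow_le_pow_left₀ (norm_nonneg _) h4 2
    rw [e1, ← hnu, ← hnw, Complex.ofReal_re, Complex.ofReal_re]
    exact hfin
  exact fun k => weyl_mono h1 h2 hle μ lam hμa hla σ τ hμ hl k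
end

section
/- Let A be an a×a positive definite Hermitian matrix and B an a×b matrix (a > b) with B^H B = I_b. Then tr((B^H A B)⁻¹) ≤ tr(B^H A⁻¹ B). -/
open Matrix ComplexOrder

private lemma trace_re_nonneg {n : ℕ} {P : Matrix (Fin n) (Fin n) ℂ} (hP : P.PosSemidef) :
    0 ≤ P.trace.re := by
  rw [Matrix.trace, Complex.re_sum]
  apply Finset.sum_nonneg
  intro i _
  have := hP.re_dotProduct_nonneg (Pi.single i 1)
  simpa [dotProduct, Matrix.mulVec, Pi.single_apply, Matrix.diag] using this

private lemma posDef_conj {n m : ℕ} {A : Matrix (Fin n) (Fin n) ℂ} (hA : A.PosDef)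
    {B : Matrix (Fin n) (Fin m) ℂ} (hB : Bᴴ * B = 1) : (Bᴴ * A * B).PosDef := by
  refine Matrix.PosDef.of_dotProduct_mulVec_pos (Matrix.isHermitian_conjTranspose_mul_mul B hA.1) fun x hx => ?_
  have hBx : B *ᵥ x ≠ 0 := by
    intro h
    apply hx
    have : Bᴴ *ᵥ (B *ᵥ x) = x := by
      rw [Matrix.mulVec_mulVec, hB, Matrix.one_mulVec]
    rw [h, Matrix.mulVec_zero] at this
    exact this.symm
  have := hA.dotProduct_mulVec_pos hBx
  simpa only [Matrix.star_mulVec, Matrix.dotProduct_mulVec, Matrix.vecMul_vecMul] using this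

theorem stmt5 {a b : ℕ} (hab : b < a) (A : Matrix (Fin a) (Fin a) ℂ) (hA : A.PosDef)
    (B : Matrix (Fin a) (Fin b) ℂ) (hB : Bᴴ * B = 1) :
    (((Bᴴ * A * B)⁻¹).trace).re ≤ ((Bᴴ * A⁻¹ * B).trace).re := by
  set M := Bᴴ * A * B with hM_def
  set N := Bᴴ * A⁻¹ * B with hN_def
  have hM : M.PosDef := posDef_conj hA hB
  haveI : Invertible A := hA.isUnit.invertible
  haveI : Invertible M := hM.isUnit.invertible
  -- fromBlocks A 1 1 A⁻¹ is PSD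
  have h1 : (Matrix.fromBlocks A 1 (1 : Matrix (Fin a) (Fin a) ℂ) A⁻¹).PosSemidef := by
    have := (Matrix.PosDef.fromBlocks₁₁ (1 : Matrix (Fin a) (Fin a) ℂ) A⁻¹ hA).mpr
      (by simpa using Matrix.PosSemidef.zero)
    simpa using this
  -- conjugate
  have h2 : (Matrix.fromBlocks M (1 : Matrix (Fin b) (Fin b) ℂ) 1 N).PosSemidef := by
    have := h1.conjTranspose_mul_mul_same (Matrix.fromBlocks B 0 0 B)
    have heq : (Matrix.fromBlocks B 0 0 B)ᴴ * Matrix.fromBlocks A 1 1 A⁻¹ *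
        Matrix.fromBlocks B 0 0 B = Matrix.fromBlocks M 1 1 N := by
      rw [Matrix.fromBlocks_conjTranspose, Matrix.fromBlocks_multiply,
        Matrix.fromBlocks_multiply]
      simp [hM_def, hN_def, Matrix.mul_assoc, hB]
    rwa [heq] at this
  have h3 : (N - M⁻¹).PosSemidef := by
    have h2' : (Matrix.fromBlocks M 1 (1 : Matrix (Fin b) (Fin b) ℂ)ᴴ N).PosSemidef := by
      simpa using h2
    have := (Matrix.PosDef.fromBlocks₁₁ (1 : Matrix (Fin b) (Fin b) ℂ) N hM).mp h2'
    simpa using this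
  have := trace_re_nonneg h3
  rw [Matrix.trace_sub, Complex.sub_re] at this
  linarith
end

section
/- Let A be an n×n Hermitian positive semidefinite matrix and P an n×n orthogonal projection matrix (P = P^H = P²). Then I + P A P is positive definite, and tr((I + P A P)⁻¹) ≥ tr((I + A)⁻¹). -/
open Matrix ComplexOrder

namespace Stmt18Aux

variable {n : ℕ}

section
open scoped MatrixOrder

noncomputable def msqrt (A : Matrix (Fin n) (Fin n) ℂ) : Matrix (Fin n) (Fin n) ℂ := CFC.sqrt A

lemma msqrt_posSemidef {A : Matrix (Fin n) (Fin n) ℂ} (hA : A.PosSemidef) :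
    (msqrt A).PosSemidef := (CFC.sqrt_nonneg A).posSemidef

lemma msqrt_mul_self {A : Matrix (Fin n) (Fin n) ℂ} (hA : A.PosSemidef) :
    msqrt A * msqrt A = A := CFC.sqrt_mul_sqrt_self A hA.nonneg

end

lemma trace_re_nonneg {D : Matrix (Fin n) (Fin n) ℂ} (hD : D.PosSemidef) :
    0 ≤ D.trace.re := by
  have h : ∀ i : Fin n, 0 ≤ (D i i).re := by
    intro i
    have h := hD.re_dotProduct_nonneg (Pi.single i 1)
    simpa [dotProduct, mulVec, Pi.single_apply, Finset.sum_ite_eq] using h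
  have : D.trace.re = ∑ i, (D i i).re := by
    simp [Matrix.trace, Matrix.diag, Complex.re_sum]
  rw [this]
  exact Finset.sum_nonneg fun i _ => h i

lemma posDef_conj {M B : Matrix (Fin n) (Fin n) ℂ} (hM : M.PosDef) (hB : IsUnit B.det) :
    (Bᴴ * M * B).PosDef := by
  refine Matrix.PosDef.of_dotProduct_mulVec_pos (Matrix.isHermitian_conjTranspose_mul_mul B hM.1) fun x hx => ?_
  have hBx : B *ᵥ x ≠ 0 :=
    (Matrix.mulVec_injective_iff_isUnit.mpr (Matrix.isUnit_iff_isUnit_det B |>.2 hB)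
      |>.ne_iff' (by simp)).2 hx
  simpa only [star_mulVec, dotProduct_mulVec, vecMul_vecMul] using hM.dotProduct_mulVec_pos hBx

/-- If `X` is positive definite and `1 - X` is PSD, then `X⁻¹ - 1` is PSD. -/
lemma inv_sub_one_posSemidef {X : Matrix (Fin n) (Fin n) ℂ} (hX : X.PosDef)
    (h1 : (1 - X).PosSemidef) : (X⁻¹ - 1).PosSemidef := by
  have hH : X.IsHermitian := hX.isHermitian
  set U : Matrix (Fin n) (Fin n) ℂ := (hH.eigenvectorUnitary : Matrix (Fin n) (Fin n) ℂ) with hU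
  have hUU : U * star U = 1 := (Matrix.mem_unitaryGroup_iff).mp hH.eigenvectorUnitary.2
  have hev : ∀ i, 0 < hH.eigenvalues i := hX.eigenvalues_pos
  have hev1 : ∀ i, hH.eigenvalues i ≤ 1 := by
    intro i
    have hq := h1.re_dotProduct_nonneg ⇑(hH.eigenvectorBasis i)
    rw [sub_mulVec, one_mulVec, dotProduct_sub, map_sub, ← hH.eigenvalues_eq i] at hq
    have hvv : star (⇑(hH.eigenvectorBasis i) : Fin n → ℂ) ⬝ᵥ ⇑(hH.eigenvectorBasis i) = 1 := by
      have h := (EuclideanSpace.inner_eq_star_dotProduct (𝕜 := ℂ)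
        (hH.eigenvectorBasis i) (hH.eigenvectorBasis i)).symm
      rw [inner_self_eq_norm_sq_to_K, hH.eigenvectorBasis.orthonormal.1 i] at h
      norm_num at h
      rw [dotProduct_comm] at h
      exact h
    rw [hvv] at hq
    have : RCLike.re (1 : ℂ) = 1 := by norm_num
    rw [this] at hq
    linarith
  set lam := hH.eigenvalues with hlam
  set Di : Matrix (Fin n) (Fin n) ℂ := diagonal (fun i => ((lam i : ℂ))⁻¹) with hDi
  have hspec := hH.spectral_theorem
  have hDinv : Di * diagonal (RCLike.ofReal ∘ lam) = 1 := by
    rw [hDi, diagonal_mul_diagonal]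
    convert diagonal_one using 2
    ext i
    exact inv_mul_cancel₀ (by exact_mod_cast (hev i).ne')
  have hXinv : X⁻¹ = U * Di * star U := by
    apply Matrix.inv_eq_left_inv
    rw [hspec]
    calc (U * Di * star U) * (U * diagonal (RCLike.ofReal ∘ lam) * star U)
        = U * Di * (star U * U) * diagonal (RCLike.ofReal ∘ lam) * star U := by
          simp only [mul_assoc]
      _ = U * (Di * diagonal (RCLike.ofReal ∘ lam)) * star U := by
          rw [(Matrix.mem_unitaryGroup_iff').mp hH.eigenvectorUnitary.2]
          simp only [mul_one, mul_assoc]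
      _ = 1 := by rw [hDinv, mul_one, hUU]
  have key : X⁻¹ - 1 = U * (Di - 1) * Uᴴ := by
    rw [← Matrix.star_eq_conjTranspose, mul_sub, sub_mul, hXinv, mul_one, hUU]
  rw [key]
  apply Matrix.PosSemidef.mul_mul_conjTranspose_same
  have hDieq : Di - 1 = diagonal (fun i => (((lam i)⁻¹ - 1 : ℝ) : ℂ)) := by
    rw [hDi, ← diagonal_one, diagonal_sub]
    ext i
    push_cast
    ring
  rw [hDieq]
  refine Matrix.PosSemidef.diagonal ?_
  intro i
  show (0 : ℂ) ≤ (((lam i)⁻¹ - 1 : ℝ) : ℂ)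
  rw [Complex.zero_le_real]
  have h0 : 0 < lam i := hev i
  have h1' : (1 : ℝ) ≤ (lam i)⁻¹ := (one_le_inv₀ h0).mpr (hev1 i)
  linarith

/-- Loewner antitonicity of the inverse. -/
lemma inv_sub_inv_posSemidef {M N : Matrix (Fin n) (Fin n) ℂ} (hM : M.PosDef) (hN : N.PosDef)
    (hMN : (N - M).PosSemidef) : (M⁻¹ - N⁻¹).PosSemidef := by
  set S := msqrt N with hSdef
  have hS : S.PosSemidef := msqrt_posSemidef hN.posSemidef
  have hSS : S * S = N := msqrt_mul_self hN.posSemidef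
  have hdetN : N.det ≠ 0 := hN.det_pos.ne'
  have hdetS : S.det ≠ 0 := by
    intro h
    apply hdetN
    rw [← hSS, det_mul, h, zero_mul]
  have hdetS' : IsUnit S.det := isUnit_iff_ne_zero.mpr hdetS
  set T := S⁻¹ with hTdef
  have hTH : Tᴴ = T := (hS.1.inv).symm ▸ rfl
  have hTS : T * S = 1 := Matrix.nonsing_inv_mul S hdetS'
  have hST : S * T = 1 := Matrix.mul_nonsing_inv S hdetS'
  have hdetT : IsUnit T.det := by
    rw [hTdef, Matrix.det_nonsing_inv]
    simp only [Ring.inverse_eq_inv']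
    exact isUnit_iff_ne_zero.mpr (inv_ne_zero hdetS)
  set X := T * M * T with hXdef
  have hXpd : X.PosDef := by
    have := posDef_conj hM hdetT
    rwa [hTH] at this
  have hTNT : T * N * T = 1 := by
    rw [← hSS, show T * (S * S) * T = (T * S) * (S * T) by simp only [mul_assoc], hTS, hST,
      one_mul]
  have h1X : (1 - X).PosSemidef := by
    have h := hMN.conjTranspose_mul_mul_same T
    rw [hTH, mul_sub, sub_mul, hTNT] at h
    exact h
  have hkey := inv_sub_one_posSemidef hXpd h1X
  have hTinv : T⁻¹ = S := Matrix.nonsing_inv_nonsing_inv S hdetS'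
  have hXinv : X⁻¹ = S * M⁻¹ * S := by
    rw [hXdef, Matrix.mul_inv_rev, Matrix.mul_inv_rev, hTinv, mul_assoc]
  have hMinv : T * X⁻¹ * T = M⁻¹ := by
    rw [hXinv, show T * (S * M⁻¹ * S) * T = (T * S) * M⁻¹ * (S * T) by simp only [mul_assoc],
      hTS, hST, one_mul, mul_one]
  have hNinv : T * T = N⁻¹ := by
    rw [← hSS, Matrix.mul_inv_rev]
  have heq : M⁻¹ - N⁻¹ = Tᴴ * (X⁻¹ - 1) * T := by
    rw [hTH, mul_sub, sub_mul, hMinv, mul_one, hNinv]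
  rw [heq]
  exact hkey.conjTranspose_mul_mul_same T

lemma trace_inv_one_add_eq (C : Matrix (Fin n) (Fin n) ℂ) :
    ((1 + Cᴴ * C)⁻¹).trace = ((1 + C * Cᴴ)⁻¹).trace := by
  have hY : (1 + Cᴴ * C).PosDef :=
    Matrix.PosDef.add_posSemidef Matrix.PosDef.one (Matrix.posSemidef_conjTranspose_mul_self C)
  have hX : (1 + C * Cᴴ).PosDef :=
    Matrix.PosDef.add_posSemidef Matrix.PosDef.one (Matrix.posSemidef_self_mul_conjTranspose C)
  set Y := 1 + Cᴴ * C with hYdef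
  set X := 1 + C * Cᴴ with hXdef
  have hYd : IsUnit Y.det := hY.det_pos.ne'.isUnit
  have hXd : IsUnit X.det := hX.det_pos.ne'.isUnit
  have hYY : Y * Y⁻¹ = 1 := Matrix.mul_nonsing_inv Y hYd
  have hXX : X * X⁻¹ = 1 := Matrix.mul_nonsing_inv X hXd
  have hXXl : X⁻¹ * X = 1 := Matrix.nonsing_inv_mul X hXd
  have hcomm : X * C = C * Y := by rw [hXdef, hYdef]; noncomm_ring
  have hkey : C * Y⁻¹ = X⁻¹ * C := by
    calc C * Y⁻¹ = (X⁻¹ * X) * (C * Y⁻¹) := by rw [hXXl, one_mul]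
      _ = X⁻¹ * (X * C) * Y⁻¹ := by simp only [mul_assoc]
      _ = X⁻¹ * (C * Y) * Y⁻¹ := by rw [hcomm]
      _ = X⁻¹ * C * (Y * Y⁻¹) := by simp only [mul_assoc]
      _ = X⁻¹ * C := by rw [hYY, mul_one]
  have hYe : Y⁻¹ = 1 - Cᴴ * C * Y⁻¹ := by
    have h : Y⁻¹ + Cᴴ * C * Y⁻¹ = 1 := by
      have := hYY
      rw [hYdef] at this ⊢
      rw [add_mul, one_mul] at this
      exact this
    exact eq_sub_of_add_eq h
  have hXe : X⁻¹ = 1 - C * Cᴴ * X⁻¹ := by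
    have h : X⁻¹ + C * Cᴴ * X⁻¹ = 1 := by
      have := hXX
      rw [hXdef] at this ⊢
      rw [add_mul, one_mul] at this
      exact this
    exact eq_sub_of_add_eq h
  have htr : (Cᴴ * C * Y⁻¹).trace = (C * Cᴴ * X⁻¹).trace := by
    calc (Cᴴ * C * Y⁻¹).trace = (Cᴴ * (C * Y⁻¹)).trace := by rw [mul_assoc]
      _ = (Cᴴ * (X⁻¹ * C)).trace := by rw [hkey]
      _ = ((X⁻¹ * C) * Cᴴ).trace := by rw [Matrix.trace_mul_comm]
      _ = (X⁻¹ * (C * Cᴴ)).trace := by rw [mul_assoc]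
      _ = (C * Cᴴ * X⁻¹).trace := by rw [Matrix.trace_mul_comm]
  rw [hYe, hXe, Matrix.trace_sub, Matrix.trace_sub, htr]

end Stmt18Aux

theorem stmt18 {n : ℕ} (A P : Matrix (Fin n) (Fin n) ℂ) (hA : A.PosSemidef)
    (hP1 : Pᴴ = P) (hP2 : P * P = P) :
    (1 + P * A * P).PosDef ∧
      (((1 + A)⁻¹).trace).re ≤ (((1 + P * A * P)⁻¹).trace).re := by
  classical
  set S := Stmt18Aux.msqrt A with hSdef
  have hS : S.PosSemidef := Stmt18Aux.msqrt_posSemidef hA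
  have hSS : S * S = A := Stmt18Aux.msqrt_mul_self hA
  have hSH : Sᴴ = S := hS.1
  set C := S * P with hCdef
  have hCH : Cᴴ = P * S := by rw [hCdef, conjTranspose_mul, hP1, hSH]
  have hCC : Cᴴ * C = P * A * P := by
    rw [hCH, hCdef, show P * S * (S * P) = P * (S * S) * P by simp only [mul_assoc], hSS]
  have hCC' : C * Cᴴ = S * P * S := by
    rw [hCH, hCdef, show S * P * (P * S) = S * (P * P) * S by simp only [mul_assoc], hP2]
  have hPAPpsd : (P * A * P).PosSemidef := by
    rw [← hCC]; exact Matrix.posSemidef_conjTranspose_mul_self C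
  have hPD : (1 + P * A * P).PosDef := Matrix.PosDef.add_posSemidef Matrix.PosDef.one hPAPpsd
  refine ⟨hPD, ?_⟩
  have hBpsd : (S * P * S).PosSemidef := by
    rw [← hCC']; exact Matrix.posSemidef_self_mul_conjTranspose C
  have hsub : (A - S * P * S).PosSemidef := by
    have h1P : (1 - P).PosSemidef := by
      have hh : (1 - P)ᴴ * (1 - P) = 1 - P := by
        rw [conjTranspose_sub, conjTranspose_one, hP1, mul_sub, mul_one, sub_mul, one_mul, hP2]
        abel
      rw [← hh]
      exact Matrix.posSemidef_conjTranspose_mul_self _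
    have h := h1P.conjTranspose_mul_mul_same S
    rw [hSH, mul_sub, sub_mul, mul_one, hSS] at h
    exact h
  have hPDB : (1 + S * P * S).PosDef := Matrix.PosDef.add_posSemidef Matrix.PosDef.one hBpsd
  have hPDA : (1 + A).PosDef := Matrix.PosDef.add_posSemidef Matrix.PosDef.one hA
  have hmono := Stmt18Aux.inv_sub_inv_posSemidef hPDB hPDA (by
    have h : (1 + A) - (1 + S * P * S) = A - S * P * S := by abel
    rw [h]; exact hsub)
  have htr := Stmt18Aux.trace_re_nonneg hmono
  rw [Matrix.trace_sub, Complex.sub_re] at htr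
  have heqtr : ((1 + P * A * P)⁻¹).trace = ((1 + S * P * S)⁻¹).trace := by
    have h := Stmt18Aux.trace_inv_one_add_eq C
    rw [hCC, hCC'] at h
    exact h
  rw [heqtr]
  linarith
end
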